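/- (Key inequality of the fair primal dual method, PD3O case.) Let E be a real inner product space, f₁ : E → ℝ convex and differentiable with L-Lipschitz continuous gradient (L > 0), h : E → ℝ and φ : E → ℝ convex, and σ, τ > 0. Given x₀, y₀ ∈ E, suppose x̂ minimizes x ↦ h(x) + (1/(2σ))‖x − (x₀ − σ(y₀ + ∇f₁(x₀)))‖², set x̄ := 2x̂ − x₀ + σ(∇f₁(x₀) − ∇f₁(x̂)), and suppose y' minimizes y ↦ φ(y) + (1/(2τ))‖y − (y₀ + τ x̄)‖². Define d̄((a,b), w; (a',b'), w') := (1/(2σ))‖a − a'‖² + (1/(2τ))‖b − b'‖² + (σ/2)‖w − w'‖² − ⟨b − b', (a − a') − σ(w − w')⟩ − ⟨a − a', w − w'⟩. Then for all x, y ∈ E: [f₁(x̂) + h(x̂) + φ(y')] − [f₁(x) + h(x) + φ(y)] − (⟨x − x̂, y'⟩ − ⟨y − y', x̂⟩) ≤ d̄((x,y), ∇f₁(x); (x₀,y₀), ∇f₁(x₀)) − d̄((x,y), ∇f₁(x); (x̂,y'), ∇f₁(x̂)) − d̄((x̂,y'), ∇f₁(x); (x₀,y₀), ∇f₁(x₀))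 − (1/(2L) − σ/2)‖∇f₁(x) − ∇f₁(x̂)‖². -/

import Mathlib

open RealInnerProductSpace Topology

section Helpers

variable {E : Type*} [NormedAddCommGroup E] [InnerProductSpace ℝ E] [CompleteSpace E]

lemma hasDerivAt_along_line (f : E → ℝ) (f' : E → E)
    (hf : ∀ z, HasGradientAt f (f' z) z) (z v : E) (t : ℝ) :
    HasDerivAt (fun s : ℝ => f (z + s • v)) ⟪f' (z + t • v), v⟫ t := by
  have h1 : HasDerivAt (fun s : ℝ => z + s • v) v t := by
    simpa using ((hasDerivAt_id t).smul_const v).const_add z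
  have h2 := (hf (z + t • v)).hasFDerivAt
  have h3 := h2.comp_hasDerivAt t h1
  simpa [InnerProductSpace.toDual_apply_apply, Function.comp_def] using h3

lemma convex_grad_ineq (f : E → ℝ) (f' : E → E)
    (hconv : ConvexOn ℝ Set.univ f) (hf : ∀ z, HasGradientAt f (f' z) z) (u w : E) :
    f u + ⟪f' u, w - u⟫ ≤ f w := by
  set g : ℝ → ℝ := fun s => f (u + s • (w - u)) with hg
  have hd : HasDerivAt g ⟪f' u, w - u⟫ 0 := by
    simpa using hasDerivAt_along_line f f' hf u (w - u) 0
  have hslope : Filter.Tendsto (slope g 0) (𝓝[>] 0) (𝓝 ⟪f' u, w - u⟫) :=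
    ((hasDerivAt_iff_tendsto_slope.mp hd).mono_left
      (nhdsWithin_mono 0 fun t ht => ne_of_gt ht))
  have hle : ∀ᶠ t in 𝓝[>] (0:ℝ), slope g 0 t ≤ f w - f u := by
    filter_upwards [Ioc_mem_nhdsGT_of_mem (Set.mem_Ico.mpr ⟨le_refl (0:ℝ), one_pos⟩)]
      with t ht
    obtain ⟨ht0, ht1⟩ := ht
    have hcvx := hconv.2 (Set.mem_univ u) (Set.mem_univ w)
      (by linarith : (0:ℝ) ≤ 1 - t) ht0.le (by ring)
    have harg : (1 - t) • u + t • w = u + t • (w - u) := by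
      simp [smul_sub, sub_smul]; abel
    rw [harg] at hcvx
    have h5 : g t ≤ (1 - t) * f u + t * f w := hcvx
    have hg0 : g 0 = f u := by simp [hg]
    rw [slope_def_field, hg0, sub_zero]
    rw [div_le_iff₀ ht0]
    nlinarith [h5]
  have := le_of_tendsto hslope hle
  linarith

lemma descent_lemma (f : E → ℝ) (f' : E → E) (L : ℝ) (hL : 0 < L)
    (hf : ∀ z, HasGradientAt f (f' z) z)
    (hlip : ∀ a b, ‖f' a - f' b‖ ≤ L * ‖a - b‖) (z w : E) :
    f w ≤ f z + ⟪f' z, w - z⟫ + L / 2 * ‖w - z‖ ^ 2 := by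
  set v := w - z with hv
  set p : ℝ → ℝ := fun t => f (z + t • v) - t * ⟪f' z, v⟫ - L * t ^ 2 / 2 * ‖v‖ ^ 2 with hp
  have hpd : ∀ t : ℝ, HasDerivAt p (⟪f' (z + t • v), v⟫ - ⟪f' z, v⟫ - L * t * ‖v‖ ^ 2) t := by
    intro t
    have h1 := hasDerivAt_along_line f f' hf z v t
    have h2 : HasDerivAt (fun t : ℝ => t * ⟪f' z, v⟫) ⟪f' z, v⟫ t := by
      simpa using (hasDerivAt_id t).mul_const ⟪f' z, v⟫
    have h3 : HasDerivAt (fun t : ℝ => L * t ^ 2 / 2 * ‖v‖ ^ 2) (L * t * ‖v‖ ^ 2) t := by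
      have h4 := (((hasDerivAt_pow 2 t).const_mul L).div_const 2).mul_const (‖v‖ ^ 2)
      exact h4.congr_deriv (by ring)
    exact (h1.sub h2).sub h3
  have hderiv_nonpos : ∀ t ∈ Set.Ioo (0:ℝ) 1,
      ⟪f' (z + t • v), v⟫ - ⟪f' z, v⟫ - L * t * ‖v‖ ^ 2 ≤ 0 := by
    intro t ht
    have h1 : ⟪f' (z + t • v) - f' z, v⟫ ≤ ‖f' (z + t • v) - f' z‖ * ‖v‖ :=
      real_inner_le_norm _ _
    have h2 : ‖f' (z + t • v) - f' z‖ ≤ L * (t * ‖v‖) := by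
      have := hlip (z + t • v) z
      simpa [norm_smul, abs_of_pos ht.1] using this
    have h4 : ⟪f' (z + t • v) - f' z, v⟫ = ⟪f' (z + t • v), v⟫ - ⟪f' z, v⟫ :=
      inner_sub_left _ _ _
    have h6 : ‖f' (z + t • v) - f' z‖ * ‖v‖ ≤ L * (t * ‖v‖) * ‖v‖ :=
      mul_le_mul_of_nonneg_right h2 (norm_nonneg v)
    have h7 : L * (t * ‖v‖) * ‖v‖ = L * t * ‖v‖ ^ 2 := by ring
    linarith [h1, h6]
  have hanti : AntitoneOn p (Set.Icc (0:ℝ) 1) := by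
    apply antitoneOn_of_deriv_nonpos (convex_Icc 0 1)
    · exact Continuous.continuousOn (by
        have : Continuous p := by
          have : Differentiable ℝ p := fun t => (hpd t).differentiableAt
          exact this.continuous
        exact this)
    · intro t _
      exact (hpd t).differentiableAt.differentiableWithinAt
    · intro t ht
      rw [interior_Icc] at ht
      rw [(hpd t).deriv]
      exact hderiv_nonpos t ht
  have hp10 : p 1 ≤ p 0 := hanti (Set.mem_Icc.mpr ⟨le_refl 0, zero_le_one⟩)
    (Set.mem_Icc.mpr ⟨zero_le_one, le_refl 1⟩) zero_le_one
  have hp1 : p 1 = f w - ⟪f' z, v⟫ - L / 2 * ‖v‖ ^ 2 := by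
    simp [hp]
    simp [hv]
  have hp0 : p 0 = f z := by simp [hp]
  rw [hp1, hp0] at hp10
  linarith

lemma inner_right_hasFDerivAt (c : E) (z : E) :
    HasFDerivAt (fun w : E => ⟪c, w⟫) (InnerProductSpace.toDual ℝ E c : E →L[ℝ] ℝ) z := by
  have h := (innerSL ℝ c).hasFDerivAt (x := z)
  convert h using 1
  · ext w; simp
  · ext w; simp [InnerProductSpace.toDual_apply_apply]

lemma cocoercivity (f : E → ℝ) (f' : E → E) (L : ℝ) (hL : 0 < L)
    (hconv : ConvexOn ℝ Set.univ f) (hf : ∀ z, HasGradientAt f (f' z) z)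
    (hlip : ∀ a b, ‖f' a - f' b‖ ≤ L * ‖a - b‖) (u w : E) :
    f u - f w ≤ ⟪f' u, u - w⟫ - 1 / (2 * L) * ‖f' w - f' u‖ ^ 2 := by
  set φ : E → ℝ := fun z => f z - ⟪f' u, z⟫ with hφ
  set φ' : E → E := fun z => f' z - f' u with hφ'
  have hφconv : ConvexOn ℝ Set.univ φ := by
    refine ⟨convex_univ, fun p _ q _ s t hs ht hst => ?_⟩
    have h1 := hconv.2 (Set.mem_univ p) (Set.mem_univ q) hs ht hst
    have h2 : ⟪f' u, s • p + t • q⟫ = s * ⟪f' u, p⟫ + t * ⟪f' u, q⟫ := by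
      simp [inner_add_right, real_inner_smul_right]
    simp only [hφ, smul_eq_mul] at *
    rw [h2]
    linarith
  have hφgrad : ∀ z, HasGradientAt φ (φ' z) z := by
    intro z
    have h1 := (hf z).hasFDerivAt
    have h2 := inner_right_hasFDerivAt (f' u) z
    have h3 := h1.sub h2
    have h4 : (InnerProductSpace.toDual ℝ E) (f' z) - (InnerProductSpace.toDual ℝ E) (f' u)
        = (InnerProductSpace.toDual ℝ E) (f' z - f' u) := by
      rw [map_sub]
    rw [h4] at h3
    have h5 := h3.hasGradientAt
    rw [(InnerProductSpace.toDual ℝ E).symm_apply_apply] at h5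
    exact h5
  have hφlip : ∀ a b, ‖φ' a - φ' b‖ ≤ L * ‖a - b‖ := by
    intro a b
    have : φ' a - φ' b = f' a - f' b := by simp [hφ']
    rw [this]; exact hlip a b
  set w' := w - (1 / L) • (f' w - f' u) with hw'
  have h1 : φ u + ⟪φ' u, w' - u⟫ ≤ φ w' := convex_grad_ineq φ φ' hφconv hφgrad u w'
  have hφ'u : φ' u = 0 := by simp [hφ']
  rw [hφ'u] at h1
  simp only [inner_zero_left, add_zero] at h1
  have h2 : φ w' ≤ φ w + ⟪φ' w, w' - w⟫ + L / 2 * ‖w' - w‖ ^ 2 :=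
    descent_lemma φ φ' L hL hφgrad hφlip w w'
  have h3 : w' - w = -((1 / L) • (f' w - f' u)) := by rw [hw']; abel
  have h4 : ⟪φ' w, w' - w⟫ = -(1 / L) * ‖f' w - f' u‖ ^ 2 := by
    rw [h3, hφ']
    simp only [inner_neg_right, real_inner_smul_right, real_inner_self_eq_norm_sq]
    ring
  have h5 : ‖w' - w‖ ^ 2 = (1 / L) ^ 2 * ‖f' w - f' u‖ ^ 2 := by
    rw [h3, norm_neg, norm_smul, Real.norm_eq_abs, abs_of_pos (one_div_pos.mpr hL)]
    ring
  clear_value φ φ' w'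
  have h6 : φ u ≤ φ w - 1 / (2 * L) * ‖f' w - f' u‖ ^ 2 := by
    rw [h4, h5] at h2
    have hL' : L ≠ 0 := ne_of_gt hL
    have e : -(1 / L) * ‖f' w - f' u‖ ^ 2 + L / 2 * ((1 / L) ^ 2 * ‖f' w - f' u‖ ^ 2)
        = -(1 / (2 * L) * ‖f' w - f' u‖ ^ 2) := by field_simp; ring
    linarith [h1, h2, e]
  simp only [hφ] at h6
  have h7 : ⟪f' u, u⟫ - ⟪f' u, w⟫ = ⟪f' u, u - w⟫ := by rw [inner_sub_right]
  linarith

lemma prox_ineq (F : E → ℝ) (hFconv : ConvexOn ℝ Set.univ F) (σ : ℝ) (hσ : 0 < σ) (a xh : E)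
    (hmin : ∀ x, F xh + 1 / (2 * σ) * ‖xh - a‖ ^ 2 ≤ F x + 1 / (2 * σ) * ‖x - a‖ ^ 2) (x : E) :
    F xh - F x ≤ 1 / σ * ⟪x - xh, xh - a⟫ := by
  set c₀ : ℝ := ‖x - xh‖ ^ 2 / (2 * σ) with hc₀
  have hc₀nn : 0 ≤ c₀ := by positivity
  have key : ∀ t : ℝ, 0 < t → t ≤ 1 →
      F xh - F x ≤ 1 / σ * ⟪x - xh, xh - a⟫ + t * c₀ := by
    intro t ht0 ht1
    have hmin' := hmin (xh + t • (x - xh))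
    have harg : (1 - t) • xh + t • x = xh + t • (x - xh) := by
      simp [smul_sub, sub_smul]; abel
    have hcvx := hFconv.2 (Set.mem_univ xh) (Set.mem_univ x)
      (by linarith : (0:ℝ) ≤ 1 - t) ht0.le (by ring)
    rw [harg] at hcvx
    simp only [smul_eq_mul] at hcvx
    have hnorm : ‖xh + t • (x - xh) - a‖ ^ 2
        = ‖xh - a‖ ^ 2 + 2 * (t * ⟪xh - a, x - xh⟫) + t ^ 2 * ‖x - xh‖ ^ 2 := by
      have e1 : xh + t • (x - xh) - a = (xh - a) + t • (x - xh) := by abel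
      rw [e1, norm_add_sq_real, real_inner_smul_right, norm_smul]
      rw [Real.norm_eq_abs, abs_of_pos ht0]
      ring
    rw [hnorm] at hmin'
    have hcomm : ⟪xh - a, x - xh⟫ = ⟪x - xh, xh - a⟫ := real_inner_comm _ _
    rw [hcomm] at hmin'
    rw [mul_add, mul_add] at hmin'
    have hdiv : t * (F xh - F x) ≤ t * (1 / σ * ⟪x - xh, xh - a⟫ + t * c₀) := by
      rw [hc₀]
      have hσ' : σ ≠ 0 := ne_of_gt hσ
      have e : t * (1 / σ * ⟪x - xh, xh - a⟫ + t * (‖x - xh‖ ^ 2 / (2 * σ)))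
          = 1 / (2 * σ) * (2 * (t * ⟪x - xh, xh - a⟫)) + 1 / (2 * σ) * (t ^ 2 * ‖x - xh‖ ^ 2) := by
        field_simp
      rw [e]
      linarith [hmin', hcvx]
    exact (mul_le_mul_iff_right₀ ht0).mp hdiv
  apply le_of_forall_pos_le_add
  intro ε hε
  have hden : (0:ℝ) < c₀ + 1 := by linarith
  set t : ℝ := min 1 (ε / (c₀ + 1)) with htd
  have ht0 : 0 < t := lt_min one_pos (div_pos hε hden)
  have ht1 : t ≤ 1 := min_le_left _ _
  have h := key t ht0 ht1
  have htc : t * c₀ ≤ ε := by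
    have h1 : t ≤ ε / (c₀ + 1) := min_le_right _ _
    have h2 : t * c₀ ≤ ε / (c₀ + 1) * c₀ := mul_le_mul_of_nonneg_right h1 hc₀nn
    have h3 : ε / (c₀ + 1) * c₀ ≤ ε := by
      rw [div_mul_eq_mul_div, div_le_iff₀ hden]
      nlinarith
    linarith
  linarith

end Helpers

/-- The Bregman-type distance function `d̄` used in the PD3O case of the
fair primal dual method. -/
noncomputable def dbar {E : Type*} [NormedAddCommGroup E] [InnerProductSpace ℝ E]
    (σ τ : ℝ) (p : E × E) (w : E) (q : E × E) (w' : E) : ℝ :=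
  1 / (2 * σ) * ‖p.1 - q.1‖ ^ 2 + 1 / (2 * τ) * ‖p.2 - q.2‖ ^ 2 + σ / 2 * ‖w - w'‖ ^ 2
    - ⟪p.2 - q.2, (p.1 - q.1) - σ • (w - w')⟫ - ⟪p.1 - q.1, w - w'⟫

theorem stmt_10 {E : Type*} [NormedAddCommGroup E] [InnerProductSpace ℝ E] [CompleteSpace E]
    (f₁ h φ : E → ℝ) (f₁' : E → E) (L : ℝ) (hL : 0 < L)
    (hf₁conv : ConvexOn ℝ Set.univ f₁)
    (hf₁diff : ∀ x, HasGradientAt f₁ (f₁' x) x)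
    (hf₁lip : ∀ x y, ‖f₁' x - f₁' y‖ ≤ L * ‖x - y‖)
    (hhconv : ConvexOn ℝ Set.univ h)
    (hφconv : ConvexOn ℝ Set.univ φ)
    (σ τ : ℝ) (hσ : 0 < σ) (hτ : 0 < τ) (x₀ y₀ xhat xbar y' : E)
    (hxhat : ∀ x : E,
      h xhat + 1 / (2 * σ) * ‖xhat - (x₀ - σ • (y₀ + f₁' x₀))‖ ^ 2 ≤
      h x + 1 / (2 * σ) * ‖x - (x₀ - σ • (y₀ + f₁' x₀))‖ ^ 2)
    (hxbar : xbar = 2 • xhat - x₀ + σ • (f₁' x₀ - f₁' xhat))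
    (hy' : ∀ y : E,
      φ y' + 1 / (2 * τ) * ‖y' - (y₀ + τ • xbar)‖ ^ 2 ≤
      φ y + 1 / (2 * τ) * ‖y - (y₀ + τ • xbar)‖ ^ 2) :
    ∀ x y : E,
      (f₁ xhat + h xhat + φ y') - (f₁ x + h x + φ y) - (⟪x - xhat, y'⟫ - ⟪y - y', xhat⟫) ≤
        dbar σ τ (x, y) (f₁' x) (x₀, y₀) (f₁' x₀)
        - dbar σ τ (x, y) (f₁' x) (xhat, y') (f₁' xhat)
        - dbar σ τ (xhat, y') (f₁' x) (x₀, y₀) (f₁' x₀)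
        - (1 / (2 * L) - σ / 2) * ‖f₁' x - f₁' xhat‖ ^ 2 := by
  intro x y
  have h1 : h xhat - h x ≤ 1 / σ * ⟪x - xhat, xhat - (x₀ - σ • (y₀ + f₁' x₀))⟫ :=
    prox_ineq h hhconv σ hσ _ xhat hxhat x
  have h2 : φ y' - φ y ≤ 1 / τ * ⟪y - y', y' - (y₀ + τ • xbar)⟫ :=
    prox_ineq φ hφconv τ hτ _ y' hy' y
  have h3 : f₁ xhat - f₁ x ≤ ⟪f₁' xhat, xhat - x⟫ - 1 / (2 * L) * ‖f₁' x - f₁' xhat‖ ^ 2 :=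
    cocoercivity f₁ f₁' L hL hf₁conv hf₁diff hf₁lip xhat x
  have key : dbar σ τ (x, y) (f₁' x) (x₀, y₀) (f₁' x₀)
        - dbar σ τ (x, y) (f₁' x) (xhat, y') (f₁' xhat)
        - dbar σ τ (xhat, y') (f₁' x) (x₀, y₀) (f₁' x₀)
        - (1 / (2 * L) - σ / 2) * ‖f₁' x - f₁' xhat‖ ^ 2
      = 1 / σ * ⟪x - xhat, xhat - (x₀ - σ • (y₀ + f₁' x₀))⟫
        + 1 / τ * ⟪y - y', y' - (y₀ + τ • xbar)⟫
        + (⟪f₁' xhat, xhat - x⟫ - 1 / (2 * L) * ‖f₁' x - f₁' xhat‖ ^ 2)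
        - ⟪x - xhat, y'⟫ + ⟪y - y', xhat⟫ := by
    subst hxbar
    simp only [dbar, ← real_inner_self_eq_norm_sq]
    simp only [two_smul, inner_sub_left, inner_sub_right, inner_add_left, inner_add_right,
      real_inner_smul_left, real_inner_smul_right]
    simp only [real_inner_comm y x,
      real_inner_comm xhat x,
      real_inner_comm y' x,
      real_inner_comm x₀ x,
      real_inner_comm y₀ x,
      real_inner_comm (f₁' x) x,
      real_inner_comm (f₁' x₀) x,
      real_inner_comm (f₁' xhat) x,
      real_inner_comm xhat y,
      real_inner_comm y' y,
      real_inner_comm x₀ y,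
      real_inner_comm y₀ y,
      real_inner_comm (f₁' x) y,
      real_inner_comm (f₁' x₀) y,
      real_inner_comm (f₁' xhat) y,
      real_inner_comm y' xhat,
      real_inner_comm x₀ xhat,
      real_inner_comm y₀ xhat,
      real_inner_comm (f₁' x) xhat,
      real_inner_comm (f₁' x₀) xhat,
      real_inner_comm (f₁' xhat) xhat,
      real_inner_comm x₀ y',
      real_inner_comm y₀ y',
      real_inner_comm (f₁' x) y',
      real_inner_comm (f₁' x₀) y',
      real_inner_comm (f₁' xhat) y',
      real_inner_comm y₀ x₀,
      real_inner_comm (f₁' x) x₀,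
      real_inner_comm (f₁' x₀) x₀,
      real_inner_comm (f₁' xhat) x₀,
      real_inner_comm (f₁' x) y₀,
      real_inner_comm (f₁' x₀) y₀,
      real_inner_comm (f₁' xhat) y₀,
      real_inner_comm (f₁' x₀) (f₁' x),
      real_inner_comm (f₁' xhat) (f₁' x),
      real_inner_comm (f₁' xhat) (f₁' x₀)]
    field_simp
    ring
  linarith [h1, h2, h3, key]
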